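/- Let R be a Noetherian local ring, I an ideal such that the initial form x* of x ∈ I \ I² is a regular element of the associated graded ring G_I(R). Then for every n ≥ 1 there is an exact sequence 0 → R/I^n →^{·x} R/I^{n+1} → R'/I'^{n+1} → 0, where R' = R/(x), I' = I/(x), and the first map is multiplication by x. -/
import Mathlib


/-!
STATEMENT 11: Let `R` be a Noetherian local ring, `I` an ideal, and `x ∈ I \ I²` whose
initial form `x*` is a regular element of the associated graded ring `G_I(R)` (expressed
elementwise: for all `n`, if `r ∈ I^n` and `x·r ∈ I^{n+2}` then `r ∈ I^{n+1}`).  Then for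
every `n ≥ 1` there is an exact sequence
`0 → R/I^n →^{·x} R/I^{n+1} → R'/I'^{n+1} → 0` where `R' = R/(x)`, `I' = I/(x)`;
the cokernel `R'/I'^{n+1}` is realized as `R/(I^{n+1} + (x))`.
-/
theorem dual_hilbert_samuel_stmt_11
    (R : Type) [CommRing R] [IsLocalRing R] [IsNoetherianRing R]
    (I : Ideal R) (x : R) (hx : x ∈ I) (hx2 : x ∉ I ^ 2)
    (hreg : ∀ (n : ℕ) (r : R), r ∈ I ^ n → x * r ∈ I ^ (n + 2) → r ∈ I ^ (n + 1)) :
    ∀ n : ℕ, 1 ≤ n →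
      ∃ (f : (R ⧸ (I ^ n : Ideal R)) →ₗ[R] R ⧸ (I ^ (n + 1) : Ideal R))
        (g : (R ⧸ (I ^ (n + 1) : Ideal R)) →ₗ[R]
          R ⧸ (I ^ (n + 1) ⊔ Ideal.span {x} : Ideal R)),
        (∀ r : R, f (Submodule.Quotient.mk r) = Submodule.Quotient.mk (x * r)) ∧
        (∀ r : R, g (Submodule.Quotient.mk r) = Submodule.Quotient.mk r) ∧
        Function.Injective f ∧ Function.Surjective g ∧
        LinearMap.range f = LinearMap.ker g := by
  intro n hn
  -- key colon fact: if x * r ∈ I^(n+1) then r ∈ I^n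
  have key : ∀ r : R, x * r ∈ I ^ (n + 1) → r ∈ I ^ n := by
    intro r hr
    have step : ∀ k : ℕ, k ≤ n → r ∈ I ^ k := by
      intro k hk
      induction k with
      | zero => simpa using Submodule.mem_top
      | succ m ih =>
        have hm : r ∈ I ^ m := ih (Nat.le_of_succ_le hk)
        refine hreg m r hm ?_
        have : I ^ (n + 1) ≤ I ^ (m + 2) := Ideal.pow_le_pow_right (by omega)
        exact this hr
    exact step n le_rfl
  -- the multiplication-by-x map
  have hle : (I ^ n : Ideal R) ≤ LinearMap.ker
      (((I ^ (n + 1) : Ideal R)).mkQ.comp (LinearMap.lsmul R R x)) := by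
    intro r hr
    simp only [LinearMap.mem_ker, LinearMap.comp_apply, LinearMap.lsmul_apply,
      smul_eq_mul, Submodule.mkQ_apply, Submodule.Quotient.mk_eq_zero]
    have : x * r ∈ I * I ^ n := Ideal.mul_mem_mul hx hr
    rwa [← pow_succ'] at this
  refine ⟨Submodule.liftQ _ ((Submodule.mkQ _).comp (LinearMap.lsmul R R x)) hle,
    Submodule.mapQ _ _ LinearMap.id (by
      intro r hr
      exact Submodule.mem_sup_left hr), ?_, ?_, ?_, ?_, ?_⟩
  · intro r; rfl
  · intro r; rfl
  · -- injective
    rw [← LinearMap.ker_eq_bot, eq_bot_iff]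
    intro a ha
    obtain ⟨r, rfl⟩ := Submodule.Quotient.mk_surjective _ a
    simp only [LinearMap.mem_ker] at ha
    have : x * r ∈ (I ^ (n + 1) : Ideal R) := by
      have := (Submodule.Quotient.mk_eq_zero _).mp ha
      simpa using this
    show (Submodule.Quotient.mk r : R ⧸ (I ^ n : Ideal R)) ∈ ⊥
    rw [Submodule.mem_bot, Submodule.Quotient.mk_eq_zero]
    exact key r this
  · -- surjective
    intro a
    obtain ⟨r, rfl⟩ := Submodule.Quotient.mk_surjective _ a
    exact ⟨Submodule.Quotient.mk r, rfl⟩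
  · -- exactness
    ext a
    constructor
    · rintro ⟨b, rfl⟩
      obtain ⟨r, rfl⟩ := Submodule.Quotient.mk_surjective _ b
      simp only [LinearMap.mem_ker]
      show (Submodule.Quotient.mk (x * r) : R ⧸ _) = 0
      rw [Submodule.Quotient.mk_eq_zero]
      exact Submodule.mem_sup_right (Ideal.mul_mem_right r _ (Ideal.subset_span rfl))
    · intro ha
      obtain ⟨r, rfl⟩ := Submodule.Quotient.mk_surjective _ a
      simp only [LinearMap.mem_ker] at ha
      have hr : r ∈ (I ^ (n + 1) ⊔ Ideal.span {x} : Ideal R) := by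
        have := (Submodule.Quotient.mk_eq_zero _).mp ha
        simpa using this
      rw [Submodule.mem_sup] at hr
      obtain ⟨a, ha', b, hb, rfl⟩ := hr
      rw [Ideal.mem_span_singleton] at hb
      obtain ⟨c, rfl⟩ := hb
      refine ⟨Submodule.Quotient.mk c, ?_⟩
      show (Submodule.Quotient.mk (x * c) : R ⧸ _) = _
      rw [Submodule.Quotient.eq]
      simpa using neg_mem ha'
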